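/- Let μ be a fuzzy set of an MTL-algebra L. Then for every t ∈ (0, 0.5] the q-level set F_q(t) = {x ∈ L : μ(x) + t > 1} is either empty or a filter of L if and only if μ is an (∈̄,∈̄∨q̄)-fuzzy filter of L. -/
import Mathlib


/-- An MTL-algebra: a bounded lattice with `⊥ ≠ ⊤`, a product `odot` and residuum `rimp`,
where `odot` is associative, commutative and monotone in each argument, `⊤` is a unit,
the Galois correspondence holds and prelinearity holds. -/
class MTL (L : Type*) extends Lattice L, BoundedOrder L where
  odot : L → L → L
  rimp : L → L → L
  bot_ne_top : (⊥ : L) ≠ ⊤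
  odot_assoc : ∀ x y z : L, odot (odot x y) z = odot x (odot y z)
  odot_comm : ∀ x y : L, odot x y = odot y x
  odot_mono_left : ∀ x y z : L, x ≤ y → odot x z ≤ odot y z
  odot_mono_right : ∀ x y z : L, x ≤ y → odot z x ≤ odot z y
  odot_top : ∀ x : L, odot x ⊤ = x
  galois : ∀ x y z : L, odot x y ≤ z ↔ x ≤ rimp y z
  prelinear : ∀ x y : L, rimp x y ⊔ rimp y x = ⊤

open MTL

variable {L : Type*} [MTL L]

/-- A subset `A` is a filter: `1 ∈ A` and it is closed under modus ponens. -/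
def IsFilter' (A : Set L) : Prop :=
  (⊤ : L) ∈ A ∧ ∀ x y : L, x ∈ A → rimp x y ∈ A → y ∈ A

/-- An (∈̄,∈̄∨q̄)-fuzzy filter: `max(μ(1), 0.5) ≥ μ(x)` and
`max(μ(y), 0.5) ≥ min(μ(x → y), μ(x))`. -/
def IsBarFuzzyFilter (μ : L → ℝ) : Prop :=
  (∀ x : L, max (μ ⊤) (1/2) ≥ μ x) ∧
    ∀ x y : L, max (μ y) (1/2) ≥ min (μ (rimp x y)) (μ x)

theorem stmt_4 (μ : L → ℝ) (hμ0 : ∀ x : L, 0 ≤ μ x) (hμ1 : ∀ x : L, μ x ≤ 1) :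
    (∀ t : ℝ, 0 < t → t ≤ 1/2 → ({x : L | 1 < μ x + t} = ∅ ∨ IsFilter' {x : L | 1 < μ x + t})) ↔ IsBarFuzzyFilter μ := by

  constructor
  · intro h
    constructor
    · intro x
      by_contra hc
      push_neg at hc
      have hx2 : 1/2 < μ x := lt_of_le_of_lt (le_max_right _ _) hc
      have hxt : μ ⊤ < μ x := lt_of_le_of_lt (le_max_left _ _) hc
      set t := min (1/2 : ℝ) (1 - μ ⊤) with ht
      have ht0 : 0 < t := lt_min (by norm_num) (by linarith [hμ1 x])
      have ht2 : t ≤ 1/2 := min_le_left _ _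
      have hxF : x ∈ {x : L | 1 < μ x + t} := by
        have : 1 - μ x < t := lt_min (by linarith) (by linarith)
        show 1 < μ x + t
        linarith
      rcases h t ht0 ht2 with he | hf
      · exact absurd (he ▸ hxF) (Set.notMem_empty x)
      · have htop : 1 < μ (⊤ : L) + t := hf.1
        have : t ≤ 1 - μ ⊤ := min_le_right _ _
        linarith
    · intro x y
      by_contra hc
      push_neg at hc
      have hm2 : 1/2 < min (μ (rimp x y)) (μ x) := lt_of_le_of_lt (le_max_right _ _) hc
      have hmy : μ y < min (μ (rimp x y)) (μ x) := lt_of_le_of_lt (le_max_left _ _) hc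
      set m := min (μ (rimp x y)) (μ x) with hmdef
      set t := min (1/2 : ℝ) (1 - μ y) with ht
      have ht0 : 0 < t := lt_min (by norm_num) (by linarith [hμ1 x, min_le_right (μ (rimp x y)) (μ x), hmy])
      have ht2 : t ≤ 1/2 := min_le_left _ _
      have htm : 1 - m < t := lt_min (by linarith) (by linarith)
      have hxF : x ∈ {x : L | 1 < μ x + t} := by
        have := min_le_right (μ (rimp x y)) (μ x)
        simp only [Set.mem_setOf_eq]; linarith
      have hrF : rimp x y ∈ {x : L | 1 < μ x + t} := by
        have := min_le_left (μ (rimp x y)) (μ x)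
        simp only [Set.mem_setOf_eq]; linarith
      rcases h t ht0 ht2 with he | hf
      · exact absurd (he ▸ hxF) (Set.notMem_empty x)
      · have hyF := hf.2 x y hxF hrF
        simp only [Set.mem_setOf_eq] at hyF
        have : t ≤ 1 - μ y := min_le_right _ _
        linarith
  · intro ⟨h1, h2⟩ t ht0 ht2
    by_cases he : {x : L | 1 < μ x + t} = ∅
    · exact Or.inl he
    · right
      obtain ⟨x0, hx0⟩ := Set.nonempty_iff_ne_empty.mpr he
      simp only [Set.mem_setOf_eq] at hx0
      constructor
      · have hx2 : 1/2 < μ x0 := by linarith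
        have := h1 x0
        have : μ ⊤ ≥ μ x0 := by
          rcases max_cases (μ ⊤) (1/2 : ℝ) with ⟨heq, _⟩ | ⟨heq, hlt⟩ <;> rw [heq] at this <;> linarith
        simp only [Set.mem_setOf_eq]; linarith
      · intro x y hx hr
        simp only [Set.mem_setOf_eq] at hx hr ⊢
        have hm : 1 - t < min (μ (rimp x y)) (μ x) := lt_min (by linarith) (by linarith)
        have hm2 : 1/2 < min (μ (rimp x y)) (μ x) := by linarith
        have := h2 x y
        have : μ y ≥ min (μ (rimp x y)) (μ x) := by
          rcases max_cases (μ y) (1/2 : ℝ) with ⟨heq, _⟩ | ⟨heq, hlt⟩ <;> rw [heq] at this <;> linarith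
        linarith
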